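/- Let f, g : [R₁, R₂] × [−π, π] → ℂ be given by uniformly absolutely convergent Fourier series f(r,θ) = Σ_ℓ η_ℓ(f)(r) e^{iℓθ}, g(r,θ) = Σ_ℓ η_ℓ(g)(r) e^{iℓθ} with Σ_ℓ ‖η_ℓ(f)‖_∞ < ∞ and Σ_ℓ ‖η_ℓ(g)‖_∞ < ∞. Define ξ_ℓ(f)(s) = η_ℓ(f)(√s) s^{ℓ/2} on [R₁², R₂²]. Then for each k ∈ ℤ, ∫_{R₁}^{R₂} η_k(fg)(r) r^{k+1} dr = (1/2) Σ_{ℓ=−∞}^{∞} ∫_{R₁²}^{R₂²} ξ_ℓ(f)(s) ξ_{k−ℓ}(g)(s) ds, and the series on the right converges absolutely. -/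

import Mathlib

open Complex

lemma aux_sup_bound {a b : ℝ} (hab : a ≤ b) {φ : ℝ → ℂ} (hφ : ContinuousOn φ (Set.Icc a b)) :
    ∀ r ∈ Set.Icc a b, ‖φ r‖ ≤ ⨆ x ∈ Set.Icc a b, ‖φ x‖ := by
  obtain ⟨C, hC⟩ := isCompact_Icc.exists_bound_of_continuousOn hφ
  have hbdd : BddAbove (Set.range fun r => ⨆ _ : r ∈ Set.Icc a b, ‖φ r‖) := by
    refine ⟨max C 0, ?_⟩
    rintro _ ⟨r, rfl⟩
    dsimp only
    by_cases hr : r ∈ Set.Icc a b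
    · rw [ciSup_pos hr]; exact le_max_of_le_left (hC r hr)
    · haveI : IsEmpty (r ∈ Set.Icc a b) := ⟨fun h => hr h⟩
      rw [Real.iSup_of_isEmpty]; exact le_max_right _ _
  intro r hr
  have h := le_ciSup hbdd r
  rwa [ciSup_pos hr] at h

lemma aux_sup_nonneg {a b : ℝ} (hab : a ≤ b) {φ : ℝ → ℂ} (hφ : ContinuousOn φ (Set.Icc a b)) :
    0 ≤ ⨆ x ∈ Set.Icc a b, ‖φ x‖ :=
  le_trans (norm_nonneg _) (aux_sup_bound hab hφ a ⟨le_refl a, hab⟩)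

lemma aux_orth (n : ℤ) : (∫ θ : ℝ in (-Real.pi)..Real.pi, Complex.exp (n * θ * I))
    = if n = 0 then (2 * Real.pi : ℂ) else 0 := by
  by_cases hn : n = 0
  · simp [hn, two_mul]
  · rw [if_neg hn]
    have hc : (n : ℂ) * I ≠ 0 := by
      simp [Complex.ext_iff, hn]
    have harg : ∀ θ : ℝ, (n : ℂ) * θ * I = ((n : ℂ) * I) * θ := by intro θ; ring
    simp_rw [harg]
    rw [integral_exp_mul_complex hc]
    have h1 : ((n : ℂ) * I) * (Real.pi : ℂ) = n * (Real.pi * I) := by ring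
    have h2 : ((n : ℂ) * I) * ((-Real.pi : ℝ) : ℂ) = ((-n : ℤ) : ℂ) * (Real.pi * I) := by
      push_cast; ring
    rw [h1, h2, Complex.exp_int_mul, Complex.exp_int_mul, Complex.exp_pi_mul_I]
    have h4 : ((-1 : ℂ)) ^ (-n) = ((-1 : ℂ)) ^ n := by
      rw [zpow_neg]
      refine inv_eq_of_mul_eq_one_left ?_
      rw [← zpow_add₀ (by norm_num : (-1 : ℂ) ≠ 0), show n + n = 2 * n by ring, zpow_mul]
      norm_num
    rw [h4, sub_self, zero_div]

lemma aux_norm_exp (z : ℂ) (hz : z.re = 0) : ‖Complex.exp z‖ = 1 := by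
  rw [Complex.norm_exp, hz, Real.exp_zero]

lemma aux_zpow_le {x a b : ℝ} (ha : 0 < a) (hx : x ∈ Set.Icc a b) (m : ℤ) :
    x ^ m ≤ max (a ^ m) (b ^ m) := by
  have hx0 : 0 < x := lt_of_lt_of_le ha hx.1
  rcases le_or_gt 0 m with hm | hm
  · refine le_max_of_le_right ?_
    lift m to ℕ using hm
    rw [zpow_natCast, zpow_natCast]
    exact pow_le_pow_left₀ hx0.le hx.2 m
  · refine le_max_of_le_left ?_
    set n := m.natAbs with hn
    have hmn : m = -(n : ℤ) := by
      rw [hn, Int.ofNat_natAbs_of_nonpos hm.le, neg_neg]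
    rw [hmn, zpow_neg, zpow_neg, zpow_natCast, zpow_natCast]
    exact inv_anti₀ (pow_pos ha n) (pow_le_pow_left₀ ha.le hx.1 n)

set_option maxHeartbeats 1000000 in
/-- For `f, g` given by uniformly absolutely convergent Fourier
series in `θ` with coefficients `η_ℓ(f), η_ℓ(g)`, and `ξ_ℓ(f)(s) = η_ℓ(f)(√s) s^{ℓ/2}`,
one has, for each `k ∈ ℤ`,
`∫_{R₁}^{R₂} η_k(fg)(r) r^{k+1} dr = (1/2) ∑_{ℓ∈ℤ} ∫_{R₁²}^{R₂²} ξ_ℓ(f)(s) ξ_{k−ℓ}(g)(s) ds`,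
the series on the right converging absolutely. Here
`η_k(fg)(r) = (1/2π)∫_{−π}^{π} f(r,θ)g(r,θ)e^{−ikθ} dθ`. -/
theorem stmt16 (R₁ R₂ : ℝ) (hR₁ : 0 < R₁) (hR₁₂ : R₁ < R₂)
    (ηf ηg : ℤ → ℝ → ℂ)
    (hηfcont : ∀ ℓ, ContinuousOn (ηf ℓ) (Set.Icc R₁ R₂))
    (hηgcont : ∀ ℓ, ContinuousOn (ηg ℓ) (Set.Icc R₁ R₂))
    (hfsum : Summable (fun ℓ : ℤ => ⨆ r ∈ Set.Icc R₁ R₂, ‖ηf ℓ r‖))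
    (hgsum : Summable (fun ℓ : ℤ => ⨆ r ∈ Set.Icc R₁ R₂, ‖ηg ℓ r‖))
    (f g : ℝ → ℝ → ℂ)
    (hf : ∀ r ∈ Set.Icc R₁ R₂, ∀ θ : ℝ,
      HasSum (fun ℓ : ℤ => ηf ℓ r * Complex.exp (ℓ * θ * Complex.I)) (f r θ))
    (hg : ∀ r ∈ Set.Icc R₁ R₂, ∀ θ : ℝ,
      HasSum (fun ℓ : ℤ => ηg ℓ r * Complex.exp (ℓ * θ * Complex.I)) (g r θ)) :
    ∀ k : ℤ,
      Summable (fun ℓ : ℤ =>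
        ‖∫ s in (R₁ ^ 2)..(R₂ ^ 2),
          (ηf ℓ (Real.sqrt s) * (Real.sqrt s : ℂ) ^ ℓ) *
            (ηg (k - ℓ) (Real.sqrt s) * (Real.sqrt s : ℂ) ^ (k - ℓ))‖) ∧
      (∫ r in R₁..R₂,
          ((1 / (2 * (Real.pi : ℂ))) *
            ∫ θ in (-Real.pi)..Real.pi,
              f r θ * g r θ * Complex.exp (-(k * θ) * Complex.I)) *
            (r : ℂ) ^ (k + 1)) =
        (1 / 2) * ∑' ℓ : ℤ, ∫ s in (R₁ ^ 2)..(R₂ ^ 2),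
          (ηf ℓ (Real.sqrt s) * (Real.sqrt s : ℂ) ^ ℓ) *
            (ηg (k - ℓ) (Real.sqrt s) * (Real.sqrt s : ℂ) ^ (k - ℓ)) := by
  intro k
  have hR12 : R₁ ≤ R₂ := hR₁₂.le
  have hπ : (0 : ℝ) < Real.pi := Real.pi_pos
  have h2π : (2 * (Real.pi : ℂ)) ≠ 0 := by
    simp [Complex.ext_iff, Real.pi_ne_zero]
  set F : ℤ → ℝ := fun ℓ => ⨆ r ∈ Set.Icc R₁ R₂, ‖ηf ℓ r‖ with hFdef
  set G : ℤ → ℝ := fun ℓ => ⨆ r ∈ Set.Icc R₁ R₂, ‖ηg ℓ r‖ with hGdef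
  have hF : ∀ ℓ, ∀ r ∈ Set.Icc R₁ R₂, ‖ηf ℓ r‖ ≤ F ℓ := fun ℓ => aux_sup_bound hR12 (hηfcont ℓ)
  have hG : ∀ ℓ, ∀ r ∈ Set.Icc R₁ R₂, ‖ηg ℓ r‖ ≤ G ℓ := fun ℓ => aux_sup_bound hR12 (hηgcont ℓ)
  have hF0 : ∀ ℓ, 0 ≤ F ℓ := fun ℓ => aux_sup_nonneg hR12 (hηfcont ℓ)
  have hG0 : ∀ ℓ, 0 ≤ G ℓ := fun ℓ => aux_sup_nonneg hR12 (hηgcont ℓ)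
  have hprodFG : Summable (fun p : ℤ × ℤ => F p.1 * G p.2) :=
    hfsum.mul_of_nonneg hgsum hF0 hG0
  have hinj : Function.Injective (fun ℓ : ℤ => ((ℓ, k - ℓ) : ℤ × ℤ)) := by
    intro a b h
    exact congrArg Prod.fst h
  have hFG : Summable (fun ℓ : ℤ => F ℓ * G (k - ℓ)) := by
    have h := hprodFG.comp_injective hinj
    exact h
  -- normalizing exponentials
  have hexp1 : ∀ (m : ℤ) (θ : ℝ), ‖Complex.exp (m * θ * I)‖ = 1 := by
    intro m θ; exact aux_norm_exp _ (by simp)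
  have hexp2 : ∀ θ : ℝ, ‖Complex.exp (-((k : ℂ) * θ) * I)‖ = 1 := by
    intro θ; exact aux_norm_exp _ (by simp)
  -- Step 1: Fourier coefficient of the product
  have key : ∀ r ∈ Set.Icc R₁ R₂,
      HasSum (fun ℓ : ℤ => (2 * (Real.pi : ℂ)) * (ηf ℓ r * ηg (k - ℓ) r))
        (∫ θ in (-Real.pi)..Real.pi, f r θ * g r θ * Complex.exp (-((k : ℂ) * θ) * I)) := by
    intro r hr
    set μ := MeasureTheory.volume.restrict (Set.Ioc (-Real.pi) Real.pi) with hμ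
    set T : ℤ × ℤ → ℝ → ℂ := fun p θ =>
      (ηf p.1 r * Complex.exp (p.1 * θ * I)) * (ηg p.2 r * Complex.exp (p.2 * θ * I)) *
        Complex.exp (-((k : ℂ) * θ) * I) with hT
    have hTnorm : ∀ p θ, ‖T p θ‖ = ‖ηf p.1 r‖ * ‖ηg p.2 r‖ := by
      intro p θ
      rw [hT]
      simp only [norm_mul, hexp1, hexp2, mul_one]
    have hTcont : ∀ p, Continuous (T p) := by
      intro p
      apply Continuous.mul
      apply Continuous.mul
      · exact continuous_const.mul (Complex.continuous_exp.comp (by fun_prop))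
      · exact continuous_const.mul (Complex.continuous_exp.comp (by fun_prop))
      · exact Complex.continuous_exp.comp (by fun_prop)
    have hTint : ∀ p, MeasureTheory.Integrable (T p) μ := fun p =>
      (hTcont p).integrableOn_Ioc
    have hμuniv : (μ Set.univ).toReal = 2 * Real.pi := by
      rw [hμ, MeasureTheory.Measure.restrict_apply_univ, Real.volume_Ioc,
        ENNReal.toReal_ofReal (by linarith)]
      ring
    have hTnormint : ∀ p : ℤ × ℤ, (∫ θ, ‖T p θ‖ ∂μ) = (2 * Real.pi) * (‖ηf p.1 r‖ * ‖ηg p.2 r‖) := by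
      intro p
      simp_rw [hTnorm p]
      rw [MeasureTheory.integral_const, smul_eq_mul, ← hμuniv]; rfl
    have hTsumint : Summable (fun p : ℤ × ℤ => ∫ θ, ‖T p θ‖ ∂μ) := by
      refine Summable.of_nonneg_of_le
        (fun p => MeasureTheory.integral_nonneg fun θ => norm_nonneg _)
        (fun p => ?_) (hprodFG.mul_left (2 * Real.pi))
      rw [hTnormint p]
      exact mul_le_mul_of_nonneg_left
        (mul_le_mul (hF _ r hr) (hG _ r hr) (norm_nonneg _) (hF0 _)) (by positivity)
    have h1 := MeasureTheory.hasSum_integral_of_summable_integral_norm hTint hTsumint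
    -- pointwise sum of T
    have h2 : ∀ θ : ℝ, HasSum (fun p : ℤ × ℤ => T p θ)
        (f r θ * g r θ * Complex.exp (-((k : ℂ) * θ) * I)) := by
      intro θ
      have hsf : Summable (fun ℓ : ℤ => ‖ηf ℓ r * Complex.exp (ℓ * θ * I)‖) := by
        refine Summable.of_nonneg_of_le (fun ℓ => norm_nonneg _) (fun ℓ => ?_) hfsum
        rw [norm_mul, hexp1, mul_one]; exact hF ℓ r hr
      have hsg : Summable (fun ℓ : ℤ => ‖ηg ℓ r * Complex.exp (ℓ * θ * I)‖) := by
        refine Summable.of_nonneg_of_le (fun ℓ => norm_nonneg _) (fun ℓ => ?_) hgsum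
        rw [norm_mul, hexp1, mul_one]; exact hG ℓ r hr
      have hs := summable_mul_of_summable_norm hsf hsg
      have hmul := (hf r hr θ).mul (hg r hr θ) hs
      have hmul2 := hmul.mul_right (Complex.exp (-((k : ℂ) * θ) * I))
      exact hmul2
    have h3 : (∫ θ, (∑' p : ℤ × ℤ, T p θ) ∂μ)
        = ∫ θ in (-Real.pi)..Real.pi, f r θ * g r θ * Complex.exp (-((k : ℂ) * θ) * I) := by
      rw [intervalIntegral.integral_of_le (by linarith)]
      exact MeasureTheory.integral_congr_ae
        (MeasureTheory.ae_of_all _ fun θ => (h2 θ).tsum_eq)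
    rw [h3] at h1
    -- compute each integral
    have h4 : ∀ p : ℤ × ℤ, (∫ θ, T p θ ∂μ)
        = ηf p.1 r * ηg p.2 r * (if p.1 + p.2 - k = 0 then (2 * Real.pi : ℂ) else 0) := by
      intro p
      have hTeq : ∀ θ : ℝ, T p θ
          = (ηf p.1 r * ηg p.2 r) * Complex.exp (((p.1 + p.2 - k : ℤ) : ℂ) * θ * I) := by
        intro θ
        rw [hT]
        dsimp only
        rw [show (ηf p.1 r * Complex.exp (p.1 * θ * I)) * (ηg p.2 r * Complex.exp (p.2 * θ * I)) *
              Complex.exp (-((k : ℂ) * θ) * I)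
            = (ηf p.1 r * ηg p.2 r) *
                Complex.exp ((p.1 : ℂ) * θ * I + (p.2 : ℂ) * θ * I + -((k : ℂ) * θ) * I) by
          rw [Complex.exp_add, Complex.exp_add]; ring]
        congr 1
        push_cast
        ring
      simp_rw [hTeq]
      rw [MeasureTheory.integral_const_mul, ← intervalIntegral.integral_of_le (by linarith : -Real.pi ≤ Real.pi),
        aux_orth]
    have h5 : ∀ p : ℤ × ℤ, p ∉ Set.range (fun ℓ : ℤ => ((ℓ, k - ℓ) : ℤ × ℤ)) →
        (∫ θ, T p θ ∂μ) = 0 := by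
      intro p hp
      rw [h4, if_neg, mul_zero]
      intro hc
      exact hp ⟨p.1, by ext <;> simp <;> omega⟩
    have h6 := (hinj.hasSum_iff h5).2 h1
    refine h6.congr_fun fun ℓ => ?_
    simp only [Function.comp_apply]
    rw [h4]
    simp only [add_sub_cancel]
    rw [if_pos (by ring)]
    ring
  -- Step 1b: tsum form
  have key2 : ∀ r ∈ Set.Icc R₁ R₂,
      ((1 / (2 * (Real.pi : ℂ))) * ∫ θ in (-Real.pi)..Real.pi,
        f r θ * g r θ * Complex.exp (-((k : ℂ) * θ) * I))
      = ∑' ℓ : ℤ, ηf ℓ r * ηg (k - ℓ) r := by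
    intro r hr
    have h := (key r hr).div_const (2 * (Real.pi : ℂ))
    have h2 : HasSum (fun ℓ : ℤ => ηf ℓ r * ηg (k - ℓ) r)
        ((∫ θ in (-Real.pi)..Real.pi, f r θ * g r θ * Complex.exp (-((k : ℂ) * θ) * I))
          / (2 * (Real.pi : ℂ))) := by
      refine h.congr_fun fun ℓ => ?_
      rw [mul_div_cancel_left₀ _ h2π]
    rw [h2.tsum_eq, one_div, inv_mul_eq_div]
  -- Step 2: facts about U ℓ r := ηf ℓ r * ηg (k-ℓ) r * r^(k+1)
  have hrC : ∀ r ∈ Set.Icc R₁ R₂, (r : ℂ) ≠ 0 := by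
    intro r hr
    exact_mod_cast ne_of_gt (by exact_mod_cast lt_of_lt_of_le hR₁ hr.1 : (0:ℝ) < r)
  have hUcont : ∀ ℓ : ℤ, ContinuousOn (fun r : ℝ => ηf ℓ r * ηg (k - ℓ) r * (r : ℂ) ^ (k + 1))
      (Set.Icc R₁ R₂) := by
    intro ℓ
    refine ((hηfcont ℓ).mul (hηgcont (k - ℓ))).mul ?_
    exact (continuousOn_zpow₀ (k + 1)).comp Complex.continuous_ofReal.continuousOn
      (fun r hr => hrC r hr)
  have hUint : ∀ ℓ : ℤ, MeasureTheory.IntegrableOn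
      (fun r : ℝ => ηf ℓ r * ηg (k - ℓ) r * (r : ℂ) ^ (k + 1)) (Set.Ioc R₁ R₂) := fun ℓ =>
    ((hUcont ℓ).integrableOn_Icc).mono_set Set.Ioc_subset_Icc_self
  set C : ℝ := max (R₁ ^ (k + 1)) (R₂ ^ (k + 1)) with hCdef
  have hC0 : 0 ≤ C := le_trans (zpow_pos hR₁ (k + 1)).le (le_max_left _ _)
  have hUbound : ∀ ℓ : ℤ, ∀ r ∈ Set.Icc R₁ R₂,
      ‖ηf ℓ r * ηg (k - ℓ) r * (r : ℂ) ^ (k + 1)‖ ≤ F ℓ * G (k - ℓ) * C := by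
    intro ℓ r hr
    have hr0 : (0 : ℝ) < r := lt_of_lt_of_le hR₁ hr.1
    have hz : ‖(r : ℂ) ^ (k + 1)‖ = r ^ (k + 1) := by
      rw [norm_zpow, Complex.norm_real, Real.norm_of_nonneg hr0.le]
    rw [norm_mul, norm_mul, hz]
    have h1 := hF ℓ r hr
    have h2 := hG (k - ℓ) r hr
    have h3 := aux_zpow_le hR₁ hr (k + 1)
    have := mul_le_mul (mul_le_mul h1 h2 (norm_nonneg _) (hF0 ℓ)) h3
      (zpow_pos hr0 (k + 1)).le (mul_nonneg (hF0 ℓ) (hG0 (k - ℓ)))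
    exact this
  have hUnormint : ∀ ℓ : ℤ,
      (∫ r in Set.Ioc R₁ R₂, ‖ηf ℓ r * ηg (k - ℓ) r * (r : ℂ) ^ (k + 1)‖)
        ≤ F ℓ * G (k - ℓ) * C * (R₂ - R₁) := by
    intro ℓ
    have hmono := MeasureTheory.setIntegral_mono_on ((hUint ℓ).norm)
      (MeasureTheory.integrableOn_const measure_Ioc_lt_top.ne enorm_ne_top)
      measurableSet_Ioc
      (fun r hr => hUbound ℓ r (Set.Ioc_subset_Icc_self hr))
    refine hmono.trans ?_
    rw [MeasureTheory.setIntegral_const, smul_eq_mul, Real.volume_real_Ioc_of_le hR12]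
    ring_nf
    exact le_refl _
  have hUsumint : Summable (fun ℓ : ℤ =>
      ∫ r in Set.Ioc R₁ R₂, ‖ηf ℓ r * ηg (k - ℓ) r * (r : ℂ) ^ (k + 1)‖) := by
    refine Summable.of_nonneg_of_le
      (fun ℓ => MeasureTheory.integral_nonneg fun r => norm_nonneg _)
      hUnormint ?_
    have h := (hFG.mul_right C).mul_right (R₂ - R₁)
    exact h
  have hU1 := MeasureTheory.hasSum_integral_of_summable_integral_norm
    (fun ℓ : ℤ => hUint ℓ) hUsumint
  -- identify LHS
  have hLHS : (∫ r in R₁..R₂,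
      ((1 / (2 * (Real.pi : ℂ))) * ∫ θ in (-Real.pi)..Real.pi,
        f r θ * g r θ * Complex.exp (-((k : ℂ) * θ) * I)) * (r : ℂ) ^ (k + 1))
      = ∫ r in Set.Ioc R₁ R₂, ∑' ℓ : ℤ, ηf ℓ r * ηg (k - ℓ) r * (r : ℂ) ^ (k + 1) := by
    rw [intervalIntegral.integral_of_le hR12]
    refine MeasureTheory.setIntegral_congr_fun measurableSet_Ioc fun r hr => ?_
    have hrIcc : r ∈ Set.Icc R₁ R₂ := Set.Ioc_subset_Icc_self hr
    rw [key2 r hrIcc, ← tsum_mul_right]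
  -- Step 3: substitution s = r²
  have hsubst : ∀ ℓ : ℤ,
      (∫ s in (R₁ ^ 2)..(R₂ ^ 2),
        (ηf ℓ (Real.sqrt s) * (Real.sqrt s : ℂ) ^ ℓ) *
          (ηg (k - ℓ) (Real.sqrt s) * (Real.sqrt s : ℂ) ^ (k - ℓ)))
      = 2 * ∫ r in R₁..R₂, ηf ℓ r * ηg (k - ℓ) r * (r : ℂ) ^ (k + 1) := by
    intro ℓ
    have hderiv : ∀ x ∈ Set.uIcc R₁ R₂, HasDerivAt (fun y : ℝ => y ^ 2) (2 * x) x := by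
      intro x _
      simpa using hasDerivAt_pow 2 x
    have hcont' : ContinuousOn (fun x : ℝ => 2 * x) (Set.uIcc R₁ R₂) := by fun_prop
    have himg : (fun y : ℝ => y ^ 2) '' (Set.uIcc R₁ R₂) ⊆ Set.Icc (R₁ ^ 2) (R₂ ^ 2) := by
      rw [Set.uIcc_of_le hR12]
      rintro _ ⟨x, hx, rfl⟩
      exact ⟨pow_le_pow_left₀ hR₁.le hx.1 2, pow_le_pow_left₀ (le_trans hR₁.le hx.1) hx.2 2⟩
    have hsqrt_maps : ∀ s ∈ Set.Icc (R₁ ^ 2) (R₂ ^ 2), Real.sqrt s ∈ Set.Icc R₁ R₂ := by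
      intro s hs
      constructor
      · have := Real.sqrt_le_sqrt hs.1
        rwa [Real.sqrt_sq hR₁.le] at this
      · have := Real.sqrt_le_sqrt hs.2
        rwa [Real.sqrt_sq (by linarith)] at this
    have hsqrt_pos : ∀ s ∈ Set.Icc (R₁ ^ 2) (R₂ ^ 2), ((Real.sqrt s : ℝ) : ℂ) ≠ 0 := by
      intro s hs
      have := (hsqrt_maps s hs).1
      exact_mod_cast ne_of_gt (by exact_mod_cast lt_of_lt_of_le hR₁ this : (0:ℝ) < Real.sqrt s)
    have hsqrtC : ContinuousOn (fun s : ℝ => ((Real.sqrt s : ℝ) : ℂ))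
        (Set.Icc (R₁ ^ 2) (R₂ ^ 2)) :=
      (Complex.continuous_ofReal.comp Real.continuous_sqrt).continuousOn
    have hgcont : ContinuousOn (fun s : ℝ =>
        (ηf ℓ (Real.sqrt s) * (Real.sqrt s : ℂ) ^ ℓ) *
          (ηg (k - ℓ) (Real.sqrt s) * (Real.sqrt s : ℂ) ^ (k - ℓ)))
        (Set.Icc (R₁ ^ 2) (R₂ ^ 2)) := by
      refine ContinuousOn.mul (ContinuousOn.mul ?_ ?_) (ContinuousOn.mul ?_ ?_)
      · exact (hηfcont ℓ).comp Real.continuous_sqrt.continuousOn hsqrt_maps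
      · exact (continuousOn_zpow₀ ℓ).comp hsqrtC (fun s hs => hsqrt_pos s hs)
      · exact (hηgcont (k - ℓ)).comp Real.continuous_sqrt.continuousOn hsqrt_maps
      · exact (continuousOn_zpow₀ (k - ℓ)).comp hsqrtC (fun s hs => hsqrt_pos s hs)
    have hcv := intervalIntegral.integral_comp_smul_deriv' hderiv hcont' (hgcont.mono himg)
    rw [← hcv, ← intervalIntegral.integral_const_mul]
    apply intervalIntegral.integral_congr
    intro x hx
    rw [Set.uIcc_of_le hR12] at hx
    have hx0 : (0 : ℝ) < x := lt_of_lt_of_le hR₁ hx.1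
    have hxc : (x : ℂ) ≠ 0 := hrC x hx
    have hsq : Real.sqrt (x ^ 2) = x := Real.sqrt_sq hx0.le
    show (2 * x : ℝ) • ((fun s : ℝ =>
        (ηf ℓ (Real.sqrt s) * (Real.sqrt s : ℂ) ^ ℓ) *
          (ηg (k - ℓ) (Real.sqrt s) * (Real.sqrt s : ℂ) ^ (k - ℓ))) ∘ (fun y : ℝ => y ^ 2)) x
      = 2 * (ηf ℓ x * ηg (k - ℓ) x * (x : ℂ) ^ (k + 1))
    have e1 : (x : ℂ) ^ ℓ * (x : ℂ) ^ (k - ℓ) = (x : ℂ) ^ k := by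
      rw [← zpow_add₀ hxc]
      congr 1
      ring
    have e2 : (x : ℂ) ^ (k + 1) = (x : ℂ) ^ k * x := by
      rw [zpow_add₀ hxc, zpow_one]
    simp only [Function.comp_apply, hsq]
    rw [Complex.real_smul, e2, ← e1]
    push_cast
    ring
  -- assemble
  refine ⟨?_, ?_⟩
  · refine Summable.of_nonneg_of_le (fun ℓ => norm_nonneg _) (fun ℓ => ?_) (hUsumint.mul_left 2)
    rw [hsubst ℓ, norm_mul]
    have hn2 : ‖(2 : ℂ)‖ = 2 := by norm_num
    rw [hn2, intervalIntegral.integral_of_le hR12]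
    exact mul_le_mul_of_nonneg_left (MeasureTheory.norm_integral_le_integral_norm _)
      (by norm_num)
  · rw [hLHS, ← hU1.tsum_eq]
    have hterm : ∀ ℓ : ℤ,
        (∫ s in (R₁ ^ 2)..(R₂ ^ 2),
          (ηf ℓ (Real.sqrt s) * (Real.sqrt s : ℂ) ^ ℓ) *
            (ηg (k - ℓ) (Real.sqrt s) * (Real.sqrt s : ℂ) ^ (k - ℓ)))
        = 2 * ∫ r in Set.Ioc R₁ R₂, ηf ℓ r * ηg (k - ℓ) r * (r : ℂ) ^ (k + 1) := by
      intro ℓ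
      rw [hsubst ℓ, intervalIntegral.integral_of_le hR12]
    rw [tsum_congr hterm, tsum_mul_left, ← mul_assoc]
    norm_num
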